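/- arXiv:2204.08355 — 4 statements merged into one kernel-verified Lean document; each statement's English description precedes it below -/
import Mathlib

section
/- Let Z > 0 and a ∈ ℝ. There exists a function F : ℝ × ℝ → ℝ which is infinitely differentiable (ContDiffOn of order ∞) on the set {(E, x) : E ≥ 0, x > 0, E·a < Z}, such that: (i) for all E > 0 and x > 0 with E·a < Z one has F(E, x) = (1/x)·√(E + Z·x − E·a·x) + E^{−1/2}·(Z − E·a)·arsinh(√E/√((Z − E·a)·x)); and (ii) for all x > 0 one has F(0, x) = 2·√(Z/x). In other words, the apparent singularity of the phase Φ(x; σ) at σ = 0 is removable to all orders as a function of E = σ², with boundary value 2√(Z/x) at zero energy. -/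
open MeasureTheory Set
open scoped Interval

lemma nbhd_ball {U : Set (ℝ × ℝ)} (hU : IsOpen U) {p : ℝ × ℝ} (hp : p ∈ U) :
    ∃ r : ℝ, 0 < r ∧ Metric.closedBall p r ⊆ U := by
  obtain ⟨ε, hε, hball⟩ := Metric.isOpen_iff.1 hU p hp
  exact ⟨ε / 2, by linarith, fun q hq =>
    hball (lt_of_le_of_lt (Metric.mem_closedBall.1 hq) (by linarith))⟩

lemma aesm_of_contOn {E : Type} [NormedAddCommGroup E]
    {g : (ℝ × ℝ) × ℝ → E} {V : Set ((ℝ × ℝ) × ℝ)}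
    (hg : ContinuousOn g V) {x : ℝ × ℝ}
    (hx : ∀ t ∈ Set.Icc (0:ℝ) 1, (x, t) ∈ V) :
    AEStronglyMeasurable (fun t => g (x, t)) (volume.restrict (Ι (0:ℝ) 1)) := by
  have h1 : ContinuousOn (fun t => g (x, t)) (Set.Icc (0:ℝ) 1) :=
    hg.comp (by fun_prop) (fun t ht => hx t ht)
  have : Ι (0:ℝ) 1 = Set.Ioc 0 1 := Set.uIoc_of_le (by norm_num)
  rw [this]
  exact (h1.mono Set.Ioc_subset_Icc_self).aestronglyMeasurable measurableSet_Ioc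

lemma contOn_paramInt {E : Type} [NormedAddCommGroup E] [NormedSpace ℝ E]
    {g : (ℝ × ℝ) × ℝ → E} {V : Set ((ℝ × ℝ) × ℝ)} (hV : IsOpen V)
    {U : Set (ℝ × ℝ)} (hU : IsOpen U)
    (hUV : ∀ p ∈ U, ∀ t ∈ Set.Icc (0:ℝ) 1, ((p, t) : (ℝ × ℝ) × ℝ) ∈ V)
    (hg : ContinuousOn g V) :
    ContinuousOn (fun p => ∫ t in (0:ℝ)..1, g (p, t)) U := by
  intro p₀ hp₀
  obtain ⟨r, hr, hrU⟩ := nbhd_ball hU hp₀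
  have hK : IsCompact (Metric.closedBall p₀ r ×ˢ Set.Icc (0:ℝ) 1) :=
    (isCompact_closedBall _ _).prod isCompact_Icc
  have hKV : (Metric.closedBall p₀ r ×ˢ Set.Icc (0:ℝ) 1) ⊆ V := fun q hq =>
    hUV q.1 (hrU hq.1) q.2 hq.2
  obtain ⟨C, hC⟩ := hK.exists_bound_of_continuousOn (hg.mono hKV)
  apply ContinuousAt.continuousWithinAt
  apply intervalIntegral.continuousAt_of_dominated_interval
    (bound := fun _ => C)
  · filter_upwards [Metric.closedBall_mem_nhds p₀ hr] with x hx
    exact aesm_of_contOn hg (fun t ht => hUV x (hrU hx) t ht)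
  · filter_upwards [Metric.closedBall_mem_nhds p₀ hr] with x hx
    filter_upwards with t
    intro ht
    have ht' : t ∈ Set.Icc (0:ℝ) 1 := Set.Ioc_subset_Icc_self
      (by rwa [Set.uIoc_of_le (by norm_num : (0:ℝ) ≤ 1)] at ht)
    exact hC (x, t) ⟨hx, ht'⟩
  · exact intervalIntegrable_const
  · filter_upwards with t
    intro ht
    have ht' : t ∈ Set.Icc (0:ℝ) 1 := Set.Ioc_subset_Icc_self
      (by rwa [Set.uIoc_of_le (by norm_num : (0:ℝ) ≤ 1)] at ht)
    have : ContinuousAt g (p₀, t) :=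
      hg.continuousAt (hV.mem_nhds (hUV p₀ hp₀ t ht'))
    exact ContinuousAt.comp (g := g) this (by fun_prop)

lemma contDiffOn_paramInt (n : ℕ) :
    ∀ {E : Type} [NormedAddCommGroup E] [NormedSpace ℝ E] [CompleteSpace E]
    (f : (ℝ × ℝ) × ℝ → E) (V : Set ((ℝ × ℝ) × ℝ)), IsOpen V →
    ∀ (U : Set (ℝ × ℝ)), IsOpen U →
    (∀ p ∈ U, ∀ t ∈ Set.Icc (0:ℝ) 1, ((p, t) : (ℝ × ℝ) × ℝ) ∈ V) →
    ContDiffOn ℝ n f V →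
    ContDiffOn ℝ n (fun p => ∫ t in (0:ℝ)..1, f (p, t)) U := by
  induction n with
  | zero =>
    intro E _ _ _ f V hV U hU hUV hf
    norm_num only [Nat.cast_zero, contDiffOn_zero] at hf ⊢
    exact contOn_paramInt hV hU hUV hf
  | succ n ih =>
    intro E _ _ _ f V hV U hU hUV hf
    have hcast : ((n + 1 : ℕ) : WithTop ℕ∞) = (n : WithTop ℕ∞) + 1 := by
      push_cast; rfl
    rw [hcast] at hf
    -- the partial derivative in the parameter
    set f' : (ℝ × ℝ) × ℝ → ((ℝ × ℝ) →L[ℝ] E) := fun q =>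
      (fderiv ℝ f q).comp (ContinuousLinearMap.inl ℝ (ℝ × ℝ) ℝ) with hf'def
    have hf' : ContDiffOn ℝ n f' V :=
      (hf.fderiv_of_isOpen hV le_rfl).clm_comp contDiffOn_const
    have hf'cont : ContinuousOn f' V := hf'.continuousOn
    have hfcont : ContinuousOn f V := hf.continuousOn
    -- key: derivative of the integral
    have key : ∀ p₀ ∈ U, HasFDerivAt (fun p => ∫ t in (0:ℝ)..1, f (p, t))
        (∫ t in (0:ℝ)..1, f' (p₀, t)) p₀ := by
      intro p₀ hp₀
      obtain ⟨r, hr, hrU⟩ := nbhd_ball hU hp₀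
      have hK : IsCompact (Metric.closedBall p₀ r ×ˢ Set.Icc (0:ℝ) 1) :=
        (isCompact_closedBall _ _).prod isCompact_Icc
      have hKV : (Metric.closedBall p₀ r ×ˢ Set.Icc (0:ℝ) 1) ⊆ V := fun q hq =>
        hUV q.1 (hrU hq.1) q.2 hq.2
      obtain ⟨C, hC⟩ := hK.exists_bound_of_continuousOn (hf'cont.mono hKV)
      have hIoc : Ι (0:ℝ) 1 = Set.Ioc 0 1 := Set.uIoc_of_le (by norm_num)
      have hdiff : ∀ x ∈ Metric.ball p₀ r, ∀ t ∈ Set.Icc (0:ℝ) 1,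
          HasFDerivAt (fun p => f (p, t)) (f' (x, t)) x := by
        intro x hx t ht
        have hxt : ((x, t) : (ℝ × ℝ) × ℝ) ∈ V :=
          hUV x (hrU (Metric.ball_subset_closedBall hx)) t ht
        have h1 : HasFDerivAt f (fderiv ℝ f (x, t)) (x, t) :=
          ((hf.differentiableOn (by exact_mod_cast not_false)).differentiableAt
            (hV.mem_nhds hxt)).hasFDerivAt
        exact h1.comp x (hasFDerivAt_prodMk_left x t)
      have := intervalIntegral.hasFDerivAt_integral_of_dominated_of_fderiv_le
        (F := fun x t => f (x, t)) (F' := fun x t => f' (x, t)) (x₀ := p₀)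
        (bound := fun _ => C) (μ := volume) (a := 0) (b := 1) (Metric.ball_mem_nhds p₀ hr)
        ?_ ?_ ?_ ?_ ?_ ?_
      · exact this
      · filter_upwards [Metric.closedBall_mem_nhds p₀ hr] with x hx
        exact aesm_of_contOn hfcont (fun t ht => hUV x (hrU hx) t ht)
      · apply ContinuousOn.intervalIntegrable
        rw [Set.uIcc_of_le (by norm_num : (0:ℝ) ≤ 1)]
        exact hfcont.comp (by fun_prop) (fun t ht => hUV p₀ hp₀ t ht)
      · exact aesm_of_contOn hf'cont (fun t ht => hUV p₀ hp₀ t ht)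
      · filter_upwards with t ht x hx
        have ht' : t ∈ Set.Icc (0:ℝ) 1 := Set.Ioc_subset_Icc_self (by rwa [hIoc] at ht)
        exact hC (x, t) ⟨Metric.ball_subset_closedBall hx, ht'⟩
      · exact intervalIntegrable_const
      · filter_upwards with t ht x hx
        have ht' : t ∈ Set.Icc (0:ℝ) 1 := Set.Ioc_subset_Icc_self (by rwa [hIoc] at ht)
        exact hdiff x hx t ht'
    rw [hcast, contDiffOn_succ_iff_fderiv_of_isOpen hU]
    refine ⟨fun p hp => ((key p hp).differentiableAt).differentiableWithinAt, by simp, ?_⟩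
    exact (ih f' V hV U hU hUV hf').congr fun p hp => (key p hp).fderiv

/-- The phase `Φ(x;σ)` is, as a function of `(E, x)` with `E = σ²`,
smooth up to `E = 0` on the attractive region `{E ≥ 0, x > 0, E·a < Z}`, with boundary
value `2√(Z/x)` at zero energy. -/
theorem stmt1 (Z a : ℝ) (hZ : 0 < Z) :
    ∃ F : ℝ × ℝ → ℝ,
      ContDiffOn ℝ (⊤ : ℕ∞) F {p : ℝ × ℝ | 0 ≤ p.1 ∧ 0 < p.2 ∧ p.1 * a < Z} ∧
      (∀ E : ℝ, 0 < E → ∀ x : ℝ, 0 < x → E * a < Z →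
        F (E, x) = (1 / x) * Real.sqrt (E + Z * x - E * a * x)
          + E ^ (-(1 / 2) : ℝ) * (Z - E * a)
            * Real.arsinh (Real.sqrt E / Real.sqrt ((Z - E * a) * x))) ∧
      (∀ x : ℝ, 0 < x → F (0, x) = 2 * Real.sqrt (Z / x)) := by
  classical
  set f : (ℝ × ℝ) × ℝ → ℝ := fun q =>
    (Z - q.1.1 * a) * (Real.sqrt ((Z - q.1.1 * a) * q.1.2 + q.1.1 * q.2 ^ 2))⁻¹ with hfdef
  set V : Set ((ℝ × ℝ) × ℝ) :=
    {q | 0 < (Z - q.1.1 * a) * q.1.2 + q.1.1 * q.2 ^ 2} with hVdef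
  set U : Set (ℝ × ℝ) :=
    {p | 0 < p.2 ∧ p.1 * a < Z ∧ 0 < p.1 + (Z - p.1 * a) * p.2} with hUdef
  have hV : IsOpen V := isOpen_lt continuous_const (by fun_prop)
  have hU : IsOpen U := by
    have h1 : IsOpen {p : ℝ × ℝ | 0 < p.2} := isOpen_lt continuous_const continuous_snd
    have h2 : IsOpen {p : ℝ × ℝ | p.1 * a < Z} := isOpen_lt (by fun_prop) continuous_const
    have h3 : IsOpen {p : ℝ × ℝ | 0 < p.1 + (Z - p.1 * a) * p.2} :=
      isOpen_lt continuous_const (by fun_prop)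
    exact h1.inter (h2.inter h3)
  have hUV : ∀ p ∈ U, ∀ t ∈ Set.Icc (0:ℝ) 1, ((p, t) : (ℝ × ℝ) × ℝ) ∈ V := by
    rintro ⟨E, x⟩ ⟨hx, hEa, hEB⟩ t ⟨ht0, ht1⟩
    have hB : 0 < Z - E * a := by linarith
    have hbx : 0 < (Z - E * a) * x := mul_pos hB hx
    simp only [hVdef, Set.mem_setOf_eq]
    rcases le_or_gt 0 E with hE | hE
    · have : 0 ≤ E * t ^ 2 := mul_nonneg hE (sq_nonneg t)
      linarith
    · have ht2 : t ^ 2 ≤ 1 := by nlinarith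
      have : E * 1 ≤ E * t ^ 2 := mul_le_mul_of_nonpos_left ht2 hE.le
      have hEB' : 0 < (Z - E * a) * x + E := by nlinarith
      linarith
  have hfsmooth : ContDiffOn ℝ (⊤ : ℕ∞) f V := by
    intro q hq
    have hq' : 0 < (Z - q.1.1 * a) * q.1.2 + q.1.1 * q.2 ^ 2 := hq
    apply ContDiffAt.contDiffWithinAt
    have hpoly : ContDiffAt ℝ (⊤ : ℕ∞) (fun q : (ℝ × ℝ) × ℝ =>
        (Z - q.1.1 * a) * q.1.2 + q.1.1 * q.2 ^ 2) q := by fun_prop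
    have hsq : ContDiffAt ℝ (⊤ : ℕ∞) (fun q : (ℝ × ℝ) × ℝ =>
        Real.sqrt ((Z - q.1.1 * a) * q.1.2 + q.1.1 * q.2 ^ 2)) q :=
      (Real.contDiffAt_sqrt hq'.ne').comp q hpoly
    have hne : Real.sqrt ((Z - q.1.1 * a) * q.1.2 + q.1.1 * q.2 ^ 2) ≠ 0 :=
      (Real.sqrt_ne_zero'.2 hq')
    exact ContDiffAt.mul (by fun_prop) (hsq.inv hne)
  refine ⟨fun p => (1 / p.2) * Real.sqrt (p.1 + (Z - p.1 * a) * p.2)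
      + ∫ t in (0:ℝ)..1, f (p, t), ?_, ?_, ?_⟩
  · -- smoothness
    have hSU : {p : ℝ × ℝ | 0 ≤ p.1 ∧ 0 < p.2 ∧ p.1 * a < Z} ⊆ U := by
      rintro ⟨E, x⟩ ⟨hE, hx, hEa⟩
      have hB : 0 < Z - E * a := by linarith
      exact ⟨hx, hEa, by nlinarith⟩
    have h1 : ContDiffOn ℝ (⊤ : ℕ∞) (fun p : ℝ × ℝ =>
        (1 / p.2) * Real.sqrt (p.1 + (Z - p.1 * a) * p.2)) U := by
      rintro ⟨E, x⟩ ⟨hx, hEa, hpos⟩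
      apply ContDiffAt.contDiffWithinAt
      have hinv : ContDiffAt ℝ (⊤ : ℕ∞) (fun p : ℝ × ℝ => 1 / p.2) ((E, x) : ℝ × ℝ) := by
        simp only [one_div]
        exact (contDiffAt_snd).inv hx.ne'
      have hsq : ContDiffAt ℝ (⊤ : ℕ∞) (fun p : ℝ × ℝ =>
          Real.sqrt (p.1 + (Z - p.1 * a) * p.2)) ((E, x) : ℝ × ℝ) :=
        (Real.contDiffAt_sqrt (ne_of_gt hpos)).comp ((E, x) : ℝ × ℝ)
          ((by fun_prop : ContDiffAt ℝ (⊤ : ℕ∞) (fun p : ℝ × ℝ => p.1 + (Z - p.1 * a) * p.2) ((E, x) : ℝ × ℝ)))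
      exact hinv.mul hsq
    have h2 : ContDiffOn ℝ (⊤ : ℕ∞) (fun p : ℝ × ℝ => ∫ t in (0:ℝ)..1, f (p, t)) U := by
      apply contDiffOn_infty.2
      intro n
      exact contDiffOn_paramInt n f V hV U hU hUV (hfsmooth.of_le (by exact_mod_cast le_top))
    exact ((h1.add h2).mono hSU)
  · -- formula for E > 0
    intro E hE x hx hEa
    have hB : 0 < Z - E * a := by linarith
    have hbx : 0 < (Z - E * a) * x := mul_pos hB hx
    have hsbx : (0:ℝ) < Real.sqrt ((Z - E * a) * x) := Real.sqrt_pos.2 hbx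
    have hsE : (0:ℝ) < Real.sqrt E := Real.sqrt_pos.2 hE
    set c : ℝ := Real.sqrt E / Real.sqrt ((Z - E * a) * x) with hcdef
    have hint : ∫ t in (0:ℝ)..1, f ((E, x), t)
        = (Real.sqrt E)⁻¹ * (Z - E * a) * Real.arsinh c := by
      have hderiv : ∀ t ∈ Set.uIcc (0:ℝ) 1,
          HasDerivAt (fun t => (Real.sqrt E)⁻¹ * (Z - E * a) * Real.arsinh (c * t))
            (f ((E, x), t)) t := by
        intro t _
        have h1 : HasDerivAt (fun t : ℝ => c * t) c t := by
          simpa using (hasDerivAt_id t).const_mul c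
        have h2 := (Real.hasDerivAt_arsinh (c * t)).comp t h1
        have h3 := h2.const_mul ((Real.sqrt E)⁻¹ * (Z - E * a))
        refine h3.congr_deriv ?_
        have hbe : 0 < (Z - E * a) * x + E * t ^ 2 := by positivity
        have hc2 : (c * t) ^ 2 = E * t ^ 2 / ((Z - E * a) * x) := by
          rw [hcdef, mul_pow, div_pow, Real.sq_sqrt hE.le, Real.sq_sqrt hbx.le]
          ring
        have h1e : 1 + (c * t) ^ 2 = ((Z - E * a) * x + E * t ^ 2) / ((Z - E * a) * x) := by
          rw [hc2]; field_simp
        have hsbe : (0:ℝ) < Real.sqrt ((Z - E * a) * x + E * t ^ 2) := Real.sqrt_pos.2 hbe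
        simp only [hfdef]
        rw [h1e, Real.sqrt_div hbe.le, hcdef]
        field_simp
      have hintg : IntervalIntegrable (fun t => f ((E, x), t)) MeasureTheory.volume 0 1 := by
        apply ContinuousOn.intervalIntegrable
        simp only [hfdef]
        apply ContinuousOn.mul continuousOn_const
        apply ContinuousOn.inv₀
        · exact (Real.continuous_sqrt.comp (by fun_prop)).continuousOn
        · intro t _
          have : 0 < (Z - E * a) * x + E * t ^ 2 := by positivity
          exact (Real.sqrt_ne_zero'.2 this)
      rw [intervalIntegral.integral_eq_sub_of_hasDerivAt hderiv hintg]
      simp [Real.arsinh_zero]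
    have hrpow : E ^ (-(1 / 2) : ℝ) = (Real.sqrt E)⁻¹ := by
      rw [Real.rpow_neg hE.le, ← Real.sqrt_eq_rpow]
    simp only
    rw [hint, hrpow]
    ring_nf
  · -- value at E = 0
    intro x hx
    have hsx : (0:ℝ) < Real.sqrt x := Real.sqrt_pos.2 hx
    have hsZ : (0:ℝ) < Real.sqrt Z := Real.sqrt_pos.2 hZ
    simp only [hfdef, zero_mul, sub_zero, mul_zero, zero_add, add_zero,
      intervalIntegral.integral_const, smul_eq_mul, sub_zero, one_mul]
    have e1 : (1 / x) * Real.sqrt (Z * x) = Real.sqrt Z / Real.sqrt x := by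
      rw [Real.sqrt_mul hZ.le]
      rw [← Real.mul_self_sqrt hx.le]
      field_simp
      rw [Real.sqrt_sq hsx.le]
    have e2 : Z * (Real.sqrt (Z * x))⁻¹ = Real.sqrt Z / Real.sqrt x := by
      rw [Real.sqrt_mul hZ.le]
      nth_rewrite 1 [← Real.mul_self_sqrt hZ.le]
      field_simp
    have e3 : Real.sqrt (Z / x) = Real.sqrt Z / Real.sqrt x := Real.sqrt_div hZ.le x
    rw [e3]
    ring_nf
    ring_nf at e1 e2
    rw [e1, e2]  -- may need adjustment
    ring
end

section
/- Let Z > 0, σ ≥ 0, x̄ > 0 and n ∈ ℝ. Then for all smooth functions f, g : (0, x̄) → ℂ with compact support contained in the open interval (0, x̄): ∫₀^{x̄} conj(f(x))·(Ng)(x)·x^{−(n+1)} dx = ∫₀^{x̄} conj((Nf)(x))·g(x)·x^{−(n+1)} dx. That is, the leC-normal operator N is formally self-adjoint with respect to the scattering L² pairing. -/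
open MeasureTheory

/-- The leC-normal operator
`(Nu)(x) = 2i·x·√(σ² + Z·x)·( x·u'(x) − ((n−1)/2)·u(x) + (Z/4)·(x/(σ² + Z·x))·u(x) )`. -/
noncomputable def NleC (Z σ n : ℝ) (u : ℝ → ℂ) : ℝ → ℂ := fun x =>
  2 * Complex.I * (x : ℂ) * (Real.sqrt (σ ^ 2 + Z * x) : ℂ)
    * ((x : ℂ) * deriv u x - (((n - 1) / 2 : ℝ) : ℂ) * u x
      + ((Z / 4 : ℝ) : ℂ) * ((x / (σ ^ 2 + Z * x) : ℝ) : ℂ) * u x)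

lemma keyDeriv (Z σ n : ℝ) (hZ : 0 < Z) (f g : ℝ → ℂ)
    (hf : ContDiff ℝ (⊤ : ℕ∞) f) (hg : ContDiff ℝ (⊤ : ℕ∞) g) (x : ℝ) (hx : 0 < x) :
    HasDerivAt (fun t : ℝ => 2 * Complex.I * (Real.sqrt (σ ^ 2 + Z * t) : ℂ)
        * ((t ^ (1 - n) : ℝ) : ℂ) * ((starRingEnd ℂ) (f t) * g t))
      ((starRingEnd ℂ) (f x) * NleC Z σ n g x * ((x ^ (-(n + 1)) : ℝ) : ℂ)
        - (starRingEnd ℂ) (NleC Z σ n f x) * g x * ((x ^ (-(n + 1)) : ℝ) : ℂ)) x := by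
  have hs : 0 < σ ^ 2 + Z * x := by positivity
  set s : ℝ := Real.sqrt (σ ^ 2 + Z * x) with hsdef
  have hsne : s ≠ 0 := by positivity
  have hss : s * s = σ ^ 2 + Z * x := Real.mul_self_sqrt hs.le
  have hinner : HasDerivAt (fun t : ℝ => σ ^ 2 + Z * t) Z x := by
    simpa using ((hasDerivAt_id x).const_mul Z).const_add (σ ^ 2)
  have h1 : HasDerivAt (fun t : ℝ => Real.sqrt (σ ^ 2 + Z * t)) (Z / (2 * s)) x := by
    have := (Real.hasDerivAt_sqrt hs.ne').comp x hinner
    simpa [hsdef, div_eq_inv_mul, mul_comm, one_div, Function.comp_def] using this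
  have h2 : HasDerivAt (fun t : ℝ => t ^ (1 - n)) ((1 - n) * x ^ (1 - n - 1)) x :=
    Real.hasDerivAt_rpow_const (Or.inl hx.ne')
  have h3 : HasDerivAt f (deriv f x) x := (hf.differentiable (by simp) x).hasDerivAt
  have h4 : HasDerivAt g (deriv g x) x := (hg.differentiable (by simp) x).hasDerivAt
  have h3' : HasDerivAt (fun t => (starRingEnd ℂ) (f t)) ((starRingEnd ℂ) (deriv f x)) x := by
    simpa [Function.comp_def, Complex.conjCAE_apply] using (Complex.conjCLE.hasFDerivAt.comp_hasDerivAt x h3)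
  have H := (((h1.ofReal_comp.const_mul (2 * Complex.I)).mul h2.ofReal_comp).mul (h3'.mul h4))
  refine H.congr_deriv ?_
  symm
  unfold NleC
  simp only [Pi.mul_apply, ← hsdef]
  have e1 : x ^ (1 - n) = x ^ (-(n + 1)) * (x * x) := by
    rw [show 1 - n = -(n + 1) + 1 + 1 by ring, Real.rpow_add hx, Real.rpow_add hx,
      Real.rpow_one]; ring
  have e2 : x ^ (1 - n - 1) = x ^ (-(n + 1)) * x := by
    rw [show 1 - n - 1 = -(n + 1) + 1 by ring, Real.rpow_add hx, Real.rpow_one]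
  rw [e1, e2]
  simp only [map_mul, map_sub, map_add, Complex.conj_ofReal, Complex.conj_I, map_ofNat]
  push_cast
  have hssC : (s : ℂ) * s = (σ : ℂ) ^ 2 + Z * x := by exact_mod_cast hss
  have hsneC : (s : ℂ) ≠ 0 := by exact_mod_cast hsne
  rw [← hssC]
  field_simp
  ring

lemma NleC_eq_zero_of_nmem (Z σ n : ℝ) (f : ℝ → ℂ) {x : ℝ} (hx : x ∉ tsupport f) :
    NleC Z σ n f x = 0 := by
  have h1 : f x = 0 := image_eq_zero_of_notMem_tsupport hx
  have h2 : deriv f x = 0 := by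
    by_contra h
    exact hx (support_deriv_subset (by simpa [Function.support] using h))
  simp [NleC, h1, h2]

lemma NleC_continuousOn (Z σ n : ℝ) (hZ : 0 < Z) (hσ : 0 ≤ σ) (g : ℝ → ℂ)
    (hg : ContDiff ℝ (⊤ : ℕ∞) g) :
    ContinuousOn (NleC Z σ n g) {x : ℝ | 0 < x} := by
  have hd : ContinuousOn (fun x : ℝ => x / (σ ^ 2 + Z * x)) {x : ℝ | 0 < x} := by
    apply ContinuousOn.div continuousOn_id (by fun_prop)
    intro x hx
    have : (0:ℝ) < x := hx
    positivity
  have hderiv : Continuous (deriv g) := hg.continuous_deriv (by exact_mod_cast le_top)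
  unfold NleC
  apply ContinuousOn.mul
  · exact (Continuous.continuousOn (by continuity))
  · apply ContinuousOn.add
    · exact ((Complex.continuous_ofReal.mul hderiv).sub
        (continuous_const.mul hg.continuous)).continuousOn
    · exact (continuousOn_const.mul (Complex.continuous_ofReal.comp_continuousOn hd)).mul
        hg.continuous.continuousOn

/-- The leC-normal operator is formally self-adjoint with respect to
the scattering L² pairing `⟨f, g⟩ = ∫₀^{x̄} conj(f)·g·x^{−(n+1)} dx`. -/
theorem stmt6 (Z σ n xbar : ℝ) (hZ : 0 < Z) (hσ : 0 ≤ σ) (hxbar : 0 < xbar)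
    (f g : ℝ → ℂ)
    (hf : ContDiff ℝ (⊤ : ℕ∞) f) (hfc : HasCompactSupport f)
    (hfsupp : tsupport f ⊆ Set.Ioo 0 xbar)
    (hg : ContDiff ℝ (⊤ : ℕ∞) g) (hgc : HasCompactSupport g)
    (hgsupp : tsupport g ⊆ Set.Ioo 0 xbar) :
    ∫ x in Set.Ioo (0 : ℝ) xbar,
        (starRingEnd ℂ) (f x) * NleC Z σ n g x * ((x ^ (-(n + 1)) : ℝ) : ℂ)
      = ∫ x in Set.Ioo (0 : ℝ) xbar,
        (starRingEnd ℂ) (NleC Z σ n f x) * g x * ((x ^ (-(n + 1)) : ℝ) : ℂ) := by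
  set A : ℝ → ℂ := fun x => (starRingEnd ℂ) (f x) * NleC Z σ n g x * ((x ^ (-(n + 1)) : ℝ) : ℂ)
    with hAdef
  set B : ℝ → ℂ := fun x => (starRingEnd ℂ) (NleC Z σ n f x) * g x * ((x ^ (-(n + 1)) : ℝ) : ℂ)
    with hBdef
  have hA0 : ∀ x, x ∉ tsupport f → A x = 0 := fun x hx => by
    simp [hAdef, image_eq_zero_of_notMem_tsupport hx]
  have hB0 : ∀ x, x ∉ tsupport f → B x = 0 := fun x hx => by
    simp [hBdef, NleC_eq_zero_of_nmem Z σ n f hx]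
  -- choose a nice compact interval
  set K : Set ℝ := insert (xbar / 2) (tsupport f) with hKdef
  have hKc : IsCompact K := hfc.insert _
  have hKsub : K ⊆ Set.Ioo 0 xbar := by
    intro x hx
    rcases hx with rfl | hx
    · constructor <;> linarith
    · exact hfsupp hx
  have hKne : K.Nonempty := ⟨xbar / 2, Set.mem_insert _ _⟩
  set a : ℝ := sInf K with hadef
  set b : ℝ := sSup K with hbdef
  have ha : a ∈ Set.Ioo 0 xbar := hKsub (hKc.sInf_mem hKne)
  have hb : b ∈ Set.Ioo 0 xbar := hKsub (hKc.sSup_mem hKne)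
  set a' : ℝ := a / 2 with ha'def
  set b' : ℝ := (b + xbar) / 2 with hb'def
  have ha'0 : 0 < a' := by have := ha.1; simp only [ha'def]; linarith
  have ha'a : a' < a := by have := ha.1; simp only [ha'def]; linarith
  have hbb' : b < b' := by have := hb.2; simp only [hb'def]; linarith
  have hb'x : b' < xbar := by have := hb.2; simp only [hb'def]; linarith
  have hab : a ≤ b := csInf_le_csSup hKne hKc.bddBelow hKc.bddAbove
  have ha'b' : a' ≤ b' := by linarith
  have hbound : ∀ x ∈ tsupport f, a ≤ x ∧ x ≤ b := fun x hx =>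
    ⟨csInf_le hKc.bddBelow (Set.mem_insert_of_mem _ hx),
     le_csSup hKc.bddAbove (Set.mem_insert_of_mem _ hx)⟩
  have hK' : tsupport f ⊆ Set.Ioc a' b' := fun x hx =>
    ⟨lt_of_lt_of_le ha'a (hbound x hx).1, le_trans (hbound x hx).2 hbb'.le⟩
  have hsubpos : Set.uIcc a' b' ⊆ {x : ℝ | 0 < x} := by
    rw [Set.uIcc_of_le ha'b']
    exact fun x hx => lt_of_lt_of_le ha'0 hx.1
  -- continuity / integrability
  have hwc : ContinuousOn (fun x : ℝ => ((x ^ (-(n + 1)) : ℝ) : ℂ)) {x : ℝ | 0 < x} := by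
    intro x hx
    exact (Complex.continuous_ofReal.continuousAt.comp
      (Real.continuousAt_rpow_const x _ (Or.inl (ne_of_gt hx)))).continuousWithinAt
  have hAc : ContinuousOn A (Set.uIcc a' b') := by
    apply ContinuousOn.mono _ hsubpos
    exact ((hf.continuous.star.continuousOn.mul
      (NleC_continuousOn Z σ n hZ hσ g hg)).mul hwc)
  have hBc : ContinuousOn B (Set.uIcc a' b') := by
    apply ContinuousOn.mono _ hsubpos
    exact (((NleC_continuousOn Z σ n hZ hσ f hf).star.mul
      hg.continuous.continuousOn).mul hwc)
  have hAi : IntervalIntegrable A volume a' b' := hAc.intervalIntegrable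
  have hBi : IntervalIntegrable B volume a' b' := hBc.intervalIntegrable
  -- FTC
  set Φ : ℝ → ℂ := fun t => 2 * Complex.I * (Real.sqrt (σ ^ 2 + Z * t) : ℂ)
      * ((t ^ (1 - n) : ℝ) : ℂ) * ((starRingEnd ℂ) (f t) * g t) with hΦdef
  have hftc : ∫ x in a'..b', (A x - B x) = Φ b' - Φ a' := by
    apply intervalIntegral.integral_eq_sub_of_hasDerivAt
    · exact fun x hx => keyDeriv Z σ n hZ f g hf hg x (hsubpos hx)
    · exact hAi.sub hBi
  have ha'ns : a' ∉ tsupport f := fun h => absurd (hbound a' h).1 (not_le.mpr ha'a)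
  have hb'ns : b' ∉ tsupport f := fun h => absurd (hbound b' h).2 (not_le.mpr hbb')
  have hΦa : Φ a' = 0 := by simp [hΦdef, image_eq_zero_of_notMem_tsupport ha'ns]
  have hΦb : Φ b' = 0 := by simp [hΦdef, image_eq_zero_of_notMem_tsupport hb'ns]
  have hzero : (∫ x in a'..b', A x) = ∫ x in a'..b', B x := by
    have := hftc
    rw [intervalIntegral.integral_sub hAi hBi, hΦa, hΦb, sub_zero] at this
    exact sub_eq_zero.mp this
  have hsuppA : Function.support A ⊆ Set.Ioc a' b' := fun x hx =>
    hK' (by by_contra h; exact hx (hA0 x h))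
  have hsuppB : Function.support B ⊆ Set.Ioc a' b' := fun x hx =>
    hK' (by by_contra h; exact hx (hB0 x h))
  have hIA : (∫ x in Set.Ioo (0:ℝ) xbar, A x) = ∫ x in a'..b', A x := by
    rw [intervalIntegral.integral_eq_integral_of_support_subset hsuppA,
      setIntegral_eq_integral_of_forall_compl_eq_zero
        (fun x hx => hA0 x (fun h => hx (hfsupp h)))]
  have hIB : (∫ x in Set.Ioo (0:ℝ) xbar, B x) = ∫ x in a'..b', B x := by
    rw [intervalIntegral.integral_eq_integral_of_support_subset hsuppB,
      setIntegral_eq_integral_of_forall_compl_eq_zero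
        (fun x hx => hB0 x (fun h => hx (hfsupp h)))]
  rw [hIA, hIB, hzero]
end

section
/- Let a > 0 and σ, Z ∈ ℝ, let f : (0,∞) → ℂ be a function, and let u : (0,∞) → ℂ be twice differentiable and satisfy, for all x > 0: (1 + a·x)·x²·(d/dx)(x²·u'(x)) + σ²·u(x) + Z·x·u(x) = −f(x). Define v : (0, 1/a) → ℂ by v(y) = u(y/(1 − a·y)). Then v is twice differentiable and satisfies, for all y ∈ (0, 1/a): y²·(d/dy)(y²·v'(y)) + σ²·v(y) + (Z − σ²·a)·y·v(y) = −(1 − a·y)·f(y/(1 − a·y)). That is, the change of variable y = x/(1 + a·x) reduces the Schwarzschild-like model ODE with subleading coefficient a to the exact Coulomb model ODE with σ-dependent charge Z − σ²·a. -/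
/-- The operator `(Q v)(x) = x²·(d/dx)(x²·v'(x))`, i.e. `Q = (x²∂ₓ)²` on the half-line. -/
noncomputable def Qop (f : ℝ → ℂ) : ℝ → ℂ :=
  fun x => (x : ℂ) ^ 2 * deriv (fun y : ℝ => (y : ℂ) ^ 2 * deriv f y) x

/-- The change of variables `y = x/(1 + a·x)` (i.e. `x = y/(1 − a·y)`)
reduces the Schwarzschild-like model ODE with subleading coefficient `a` to the exact
Coulomb model ODE with σ-dependent charge `Z − σ²·a`. -/
theorem stmt11 (a σ Z : ℝ) (ha : 0 < a) (f u : ℝ → ℂ)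
    (hu : ∀ x : ℝ, 0 < x → DifferentiableAt ℝ u x)
    (hu' : ∀ x : ℝ, 0 < x → DifferentiableAt ℝ (deriv u) x)
    (hode : ∀ x : ℝ, 0 < x →
      ((1 + a * x : ℝ) : ℂ) * Qop u x + ((σ ^ 2 : ℝ) : ℂ) * u x
          + ((Z * x : ℝ) : ℂ) * u x = -f x) :
    (∀ y : ℝ, 0 < y → y < 1 / a →
      DifferentiableAt ℝ (fun t : ℝ => u (t / (1 - a * t))) y) ∧
    (∀ y : ℝ, 0 < y → y < 1 / a →
      DifferentiableAt ℝ (deriv (fun t : ℝ => u (t / (1 - a * t)))) y) ∧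
    (∀ y : ℝ, 0 < y → y < 1 / a →
      Qop (fun t : ℝ => u (t / (1 - a * t))) y
          + ((σ ^ 2 : ℝ) : ℂ) * u (y / (1 - a * y))
          + (((Z - σ ^ 2 * a) * y : ℝ) : ℂ) * u (y / (1 - a * y))
        = -(((1 - a * y : ℝ) : ℂ) * f (y / (1 - a * y)))) := by
  -- basic facts on the interval
  have hden : ∀ y : ℝ, 0 < y → y < 1 / a → 0 < 1 - a * y := by
    intro y hy0 hy1
    have := (lt_div_iff₀ ha).mp hy1
    nlinarith
  have hx : ∀ y : ℝ, 0 < y → y < 1 / a → 0 < y / (1 - a * y) := fun y hy0 hy1 =>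
    div_pos hy0 (hden y hy0 hy1)
  -- derivative of the change of variables
  have hgd : ∀ y : ℝ, 0 < y → y < 1 / a →
      HasDerivAt (fun t : ℝ => t / (1 - a * t)) (((1 - a * y) ^ 2)⁻¹) y := by
    intro y hy0 hy1
    have h1 : HasDerivAt (fun t : ℝ => t) 1 y := hasDerivAt_id y
    have h2 : HasDerivAt (fun t : ℝ => 1 - a * t) (-a) y := by
      simpa using ((hasDerivAt_id y).const_mul a).const_sub 1
    have h3 := h1.div h2 (hden y hy0 hy1).ne'
    have h4 : (1 * (1 - a * y) - y * -a) / (1 - a * y) ^ 2 = ((1 - a * y) ^ 2)⁻¹ := by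
      rw [div_eq_iff (pow_ne_zero 2 (hden y hy0 hy1).ne'), inv_mul_cancel₀ (pow_ne_zero 2 (hden y hy0 hy1).ne')]
      ring
    exact h3.congr_deriv h4
  -- derivative of v = u ∘ g
  have hv : ∀ y : ℝ, 0 < y → y < 1 / a →
      HasDerivAt (fun t : ℝ => u (t / (1 - a * t)))
        ((((1 - a * y) ^ 2)⁻¹ : ℝ) • deriv u (y / (1 - a * y))) y := by
    intro y hy0 hy1
    have := HasDerivAt.scomp (𝕜' := ℝ) y (hu _ (hx y hy0 hy1)).hasDerivAt (hgd y hy0 hy1)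
    simpa [Function.comp_def] using this
  -- local formula for deriv v
  have hev : ∀ y : ℝ, 0 < y → y < 1 / a →
      deriv (fun t : ℝ => u (t / (1 - a * t))) =ᶠ[nhds y]
        fun t : ℝ => (((1 - a * t) ^ 2)⁻¹ : ℝ) • deriv u (t / (1 - a * t)) := by
    intro y hy0 hy1
    have hmem : Set.Ioo (0 : ℝ) (1 / a) ∈ nhds y := isOpen_Ioo.mem_nhds ⟨hy0, hy1⟩
    filter_upwards [hmem] with t ht
    exact (hv t ht.1 ht.2).deriv
  refine ⟨fun y hy0 hy1 => (hv y hy0 hy1).differentiableAt, ?_, ?_⟩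
  · -- differentiability of deriv v
    intro y hy0 hy1
    have hF : DifferentiableAt ℝ
        (fun t : ℝ => (((1 - a * t) ^ 2)⁻¹ : ℝ) • deriv u (t / (1 - a * t))) y := by
      have hc : DifferentiableAt ℝ (fun t : ℝ => (((1 - a * t) ^ 2)⁻¹ : ℝ)) y := by
        have h2 : DifferentiableAt ℝ (fun t : ℝ => (1 - a * t) ^ 2) y := by
          fun_prop
        exact h2.inv (pow_ne_zero 2 (hden y hy0 hy1).ne')
      have hw : DifferentiableAt ℝ (fun t : ℝ => deriv u (t / (1 - a * t))) y := by
        have := (hu' _ (hx y hy0 hy1)).comp y (hgd y hy0 hy1).differentiableAt; exact this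
      exact hc.smul hw
    exact hF.congr_of_eventuallyEq (hev y hy0 hy1)
  · -- the ODE
    intro y hy0 hy1
    have hd := hden y hy0 hy1
    have hx' := hx y hy0 hy1
    set x := y / (1 - a * y) with hxdef
    -- inner function of Qop v agrees locally with W ∘ g
    have hWd : DifferentiableAt ℝ (fun s : ℝ => (s : ℂ) ^ 2 * deriv u s) x := by
      have h0 : DifferentiableAt ℝ (fun s : ℝ => (s : ℂ)) x :=
        Complex.ofRealCLM.differentiableAt
      have h1 : DifferentiableAt ℝ (fun s : ℝ => (s : ℂ) ^ 2) x := h0.pow 2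
      exact h1.mul (hu' x hx')
    have hJ : HasDerivAt (fun t : ℝ => ((t / (1 - a * t) : ℝ) : ℂ) ^ 2
          * deriv u (t / (1 - a * t)))
        ((((1 - a * y) ^ 2)⁻¹ : ℝ) • deriv (fun s : ℝ => (s : ℂ) ^ 2 * deriv u s) x) y := by
      have := HasDerivAt.scomp (𝕜' := ℝ) y hWd.hasDerivAt (hgd y hy0 hy1)
      simpa [Function.comp_def] using this
    have hIJ : (fun t : ℝ => (t : ℂ) ^ 2 * deriv (fun t : ℝ => u (t / (1 - a * t))) t)
        =ᶠ[nhds y] fun t : ℝ => ((t / (1 - a * t) : ℝ) : ℂ) ^ 2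
          * deriv u (t / (1 - a * t)) := by
      filter_upwards [hev y hy0 hy1] with t ht
      rw [ht]
      push_cast
      rw [Complex.real_smul]
      push_cast
      rw [div_pow]
      ring
    have hQv : Qop (fun t : ℝ => u (t / (1 - a * t))) y = Qop u x := by
      unfold Qop
      rw [Filter.EventuallyEq.deriv_eq hIJ, hJ.deriv, Complex.real_smul, hxdef]
      push_cast
      rw [div_pow]
      ring
    rw [hQv]
    have hode' := hode x hx'
    have h1c : ((1 + a * x : ℝ) : ℂ) * ((1 - a * y : ℝ) : ℂ) = 1 := by
      have : (1 + a * x) * (1 - a * y) = 1 := by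
        rw [hxdef]; field_simp; ring
      exact_mod_cast congrArg (fun r : ℝ => (r : ℂ)) this
    have hxc : ((x : ℝ) : ℂ) * ((1 - a * y : ℝ) : ℂ) = (y : ℂ) := by
      have : x * (1 - a * y) = y := by rw [hxdef]; exact div_mul_cancel₀ y hd.ne'
      exact_mod_cast congrArg (fun r : ℝ => (r : ℂ)) this
    push_cast at hode' h1c hxc ⊢
    linear_combination (1 - (a : ℂ) * y) * hode' - Qop u x * h1c - (Z : ℂ) * u x * hxc
end

section
/- Let Z > 0, x̄ > 0, ν > 0 and ε > 0. Then sup over x ∈ (0, x̄] of x^{ν+ε}·| (σ² + Z·x)^{−ν} − (Z·x)^{−ν} | tends to 0 as σ → 0⁺ (all powers being real powers of positive reals). That is, the weights (σ² + Zx)^{−ν} converge to (Zx)^{−ν} as σ → 0⁺ uniformly on (0, x̄] after multiplication by x^{ν+ε}, for every ε > 0. -/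
open Real Set Filter

/-- Core inequality: `a^{-ν} - b^{-ν} ≤ ν a^{-(ν+1)} (b-a)` for `0 < a ≤ b`. -/
lemma rpow_neg_sub_le_aux {ν a b : ℝ} (hν : 0 < ν) (ha : 0 < a) (hab : a ≤ b) :
    a ^ (-ν) - b ^ (-ν) ≤ ν * a ^ (-(ν + 1)) * (b - a) := by
  have hb : (0 : ℝ) < b := ha.trans_le hab
  set t : ℝ := a / b with ht_def
  have ht : 0 < t := div_pos ha hb
  have hlog : 1 - t⁻¹ ≤ Real.log t := Real.one_sub_inv_le_log_of_pos ht
  have hexp : ν * Real.log t + 1 ≤ Real.exp (ν * Real.log t) :=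
    Real.add_one_le_exp _
  have hpow : Real.exp (ν * Real.log t) = t ^ ν := by
    rw [Real.rpow_def_of_pos ht, mul_comm]
  have hmul : ν * (1 - t⁻¹) ≤ ν * Real.log t :=
    mul_le_mul_of_nonneg_left hlog hν.le
  have key : 1 - ν * (t⁻¹ - 1) ≤ t ^ ν := by
    rw [← hpow]; nlinarith
  have htinv : t⁻¹ = b / a := by
    rw [ht_def, inv_div]
  have hbt : b ^ (-ν) = a ^ (-ν) * t ^ ν := by
    rw [ht_def, Real.div_rpow ha.le hb.le, Real.rpow_neg ha.le, Real.rpow_neg hb.le]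
    field_simp
  have hane : a ^ (-ν) > 0 := Real.rpow_pos_of_pos ha _
  have h2 : a ^ (-ν) - b ^ (-ν) ≤ a ^ (-ν) * (ν * (t⁻¹ - 1)) := by
    rw [hbt]
    have := mul_le_mul_of_nonneg_left key hane.le
    nlinarith
  have h3 : t⁻¹ - 1 = (b - a) / a := by
    rw [htinv]; field_simp
  have h4 : a ^ (-(ν + 1)) = a ^ (-ν) * a⁻¹ := by
    rw [show -(ν + 1) = -ν + (-1) by ring, Real.rpow_add ha, Real.rpow_neg_one]
  calc a ^ (-ν) - b ^ (-ν) ≤ a ^ (-ν) * (ν * (t⁻¹ - 1)) := h2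
    _ = ν * a ^ (-(ν + 1)) * (b - a) := by
        rw [h3, h4]; field_simp

/-- The main pointwise bound, with a splitting parameter `δ`. -/
lemma stmt16_bound (Z xbar ν ε : ℝ) (hZ : 0 < Z) (hν : 0 < ν) (hε : 0 < ε)
    {δ : ℝ} (hδ : 0 < δ) (hδx : δ ≤ xbar) (σ : ℝ) {x : ℝ} (hx : x ∈ Set.Ioc (0 : ℝ) xbar) :
    x ^ (ν + ε) * |(σ ^ 2 + Z * x) ^ (-ν) - (Z * x) ^ (-ν)| ≤
      Z ^ (-ν) * δ ^ ε + xbar ^ (ν + ε) * ν * (Z * δ) ^ (-(ν + 1)) * σ ^ 2 := by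
  obtain ⟨hx0, hxb⟩ := hx
  have ha : 0 < Z * x := mul_pos hZ hx0
  have hab : Z * x ≤ σ ^ 2 + Z * x := by nlinarith [sq_nonneg σ]
  have hb : 0 < σ ^ 2 + Z * x := lt_of_lt_of_le ha hab
  have hle : (σ ^ 2 + Z * x) ^ (-ν) ≤ (Z * x) ^ (-ν) :=
    Real.rpow_le_rpow_of_nonpos ha hab (by linarith)
  have habs : |(σ ^ 2 + Z * x) ^ (-ν) - (Z * x) ^ (-ν)|
      = (Z * x) ^ (-ν) - (σ ^ 2 + Z * x) ^ (-ν) := by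
    rw [abs_sub_comm, abs_of_nonneg (by linarith)]
  rw [habs]
  have hxpow : 0 ≤ x ^ (ν + ε) := (Real.rpow_pos_of_pos hx0 _).le
  have hterm2 : 0 ≤ xbar ^ (ν + ε) * ν * (Z * δ) ^ (-(ν + 1)) * σ ^ 2 := by
    have := Real.rpow_pos_of_pos (mul_pos hZ hδ) (-(ν + 1))
    have := Real.rpow_pos_of_pos (lt_of_lt_of_le hδ hδx) (ν + ε)
    positivity
  rcases le_or_gt x δ with hcase | hcase
  · -- small x: bound by first term
    have h1 : x ^ (ν + ε) * ((Z * x) ^ (-ν) - (σ ^ 2 + Z * x) ^ (-ν))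
        ≤ x ^ (ν + ε) * (Z * x) ^ (-ν) := by
      have : 0 ≤ (σ ^ 2 + Z * x) ^ (-ν) := (Real.rpow_pos_of_pos hb _).le
      nlinarith
    have h2 : x ^ (ν + ε) * (Z * x) ^ (-ν) = Z ^ (-ν) * x ^ ε := by
      rw [Real.mul_rpow hZ.le hx0.le]
      rw [show x ^ (ν + ε) = x ^ ν * x ^ ε from by rw [← Real.rpow_add hx0]]
      rw [Real.rpow_neg hx0.le ν]
      field_simp
    have h3 : Z ^ (-ν) * x ^ ε ≤ Z ^ (-ν) * δ ^ ε := by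
      apply mul_le_mul_of_nonneg_left _ (Real.rpow_pos_of_pos hZ _).le
      exact Real.rpow_le_rpow hx0.le hcase hε.le
    linarith [h1.trans_eq h2 |>.trans h3]
  · -- large x: bound by second term
    have hcore : (Z * x) ^ (-ν) - (σ ^ 2 + Z * x) ^ (-ν)
        ≤ ν * (Z * x) ^ (-(ν + 1)) * σ ^ 2 := by
      have := rpow_neg_sub_le_aux hν ha hab
      simpa using this
    have hmono : (Z * x) ^ (-(ν + 1)) ≤ (Z * δ) ^ (-(ν + 1)) :=
      Real.rpow_le_rpow_of_nonpos (mul_pos hZ hδ)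
        (by nlinarith) (by linarith)
    have hxb' : x ^ (ν + ε) ≤ xbar ^ (ν + ε) :=
      Real.rpow_le_rpow hx0.le hxb (by linarith)
    have h1 : x ^ (ν + ε) * ((Z * x) ^ (-ν) - (σ ^ 2 + Z * x) ^ (-ν))
        ≤ xbar ^ (ν + ε) * (ν * (Z * δ) ^ (-(ν + 1)) * σ ^ 2) := by
      have hA : 0 ≤ (Z * x) ^ (-ν) - (σ ^ 2 + Z * x) ^ (-ν) := by linarith
      have hB : ν * (Z * x) ^ (-(ν + 1)) * σ ^ 2 ≤ ν * (Z * δ) ^ (-(ν + 1)) * σ ^ 2 := by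
        have := mul_le_mul_of_nonneg_right
          (mul_le_mul_of_nonneg_left hmono hν.le) (sq_nonneg σ)
        linarith
      calc x ^ (ν + ε) * ((Z * x) ^ (-ν) - (σ ^ 2 + Z * x) ^ (-ν))
          ≤ xbar ^ (ν + ε) * ((Z * x) ^ (-ν) - (σ ^ 2 + Z * x) ^ (-ν)) := by nlinarith
        _ ≤ xbar ^ (ν + ε) * (ν * (Z * δ) ^ (-(ν + 1)) * σ ^ 2) := by
            have hxbp : 0 ≤ xbar ^ (ν + ε) := (Real.rpow_pos_of_pos (lt_of_lt_of_le hδ hδx) _).le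
            exact mul_le_mul_of_nonneg_left (hcore.trans hB) hxbp
    have hfirst : 0 ≤ Z ^ (-ν) * δ ^ ε := by positivity
    nlinarith [h1]

/-- Eventual smallness of the error, uniform in `x`. -/
lemma stmt16_eventually (Z xbar ν ε : ℝ) (hZ : 0 < Z) (hxbar : 0 < xbar)
    (hν : 0 < ν) (hε : 0 < ε) {η : ℝ} (hη : 0 < η) :
    ∀ᶠ σ in nhdsWithin (0 : ℝ) (Set.Ioi 0), ∀ x ∈ Set.Ioc (0 : ℝ) xbar,
      x ^ (ν + ε) * |(σ ^ 2 + Z * x) ^ (-ν) - (Z * x) ^ (-ν)| ≤ η / 2 := by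
  -- choose δ
  set δ0 : ℝ := ((η / 4) * Z ^ ν) ^ (1 / ε) with hδ0_def
  have hδ0 : 0 < δ0 := Real.rpow_pos_of_pos (by positivity) _
  set δ : ℝ := min δ0 xbar with hδ_def
  have hδ : 0 < δ := lt_min hδ0 hxbar
  have hδx : δ ≤ xbar := min_le_right _ _
  have hterm1 : Z ^ (-ν) * δ ^ ε ≤ η / 4 := by
    have h1 : δ ^ ε ≤ δ0 ^ ε := Real.rpow_le_rpow hδ.le (min_le_left _ _) hε.le
    have h2 : δ0 ^ ε = (η / 4) * Z ^ ν := by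
      rw [hδ0_def, ← Real.rpow_mul (by positivity : (0:ℝ) ≤ η / 4 * Z ^ ν)]
      rw [one_div, inv_mul_cancel₀ hε.ne', Real.rpow_one]
    have h3 : Z ^ (-ν) * δ0 ^ ε = η / 4 := by
      calc Z ^ (-ν) * δ0 ^ ε = (Z ^ (-ν) * Z ^ ν) * (η / 4) := by rw [h2]; ring
        _ = η / 4 := by rw [← Real.rpow_add hZ]; simp
    calc Z ^ (-ν) * δ ^ ε ≤ Z ^ (-ν) * δ0 ^ ε :=
          mul_le_mul_of_nonneg_left h1 (Real.rpow_pos_of_pos hZ _).le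
      _ = η / 4 := h3
  set C : ℝ := xbar ^ (ν + ε) * ν * (Z * δ) ^ (-(ν + 1)) with hC_def
  have hC : 0 < C := by
    have := Real.rpow_pos_of_pos (mul_pos hZ hδ) (-(ν + 1))
    have := Real.rpow_pos_of_pos hxbar (ν + ε)
    positivity
  set s : ℝ := Real.sqrt (η / (4 * C)) with hs_def
  have hs : 0 < s := Real.sqrt_pos.mpr (by positivity)
  have hmem : Set.Ioo (0 : ℝ) s ∈ nhdsWithin (0 : ℝ) (Set.Ioi 0) :=
    Ioo_mem_nhdsGT_of_mem ⟨le_rfl, hs⟩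
  filter_upwards [hmem] with σ hσ x hx
  have hσ2 : σ ^ 2 < s ^ 2 := by
    obtain ⟨h1, h2⟩ := hσ
    nlinarith
  have hs2 : s ^ 2 = η / (4 * C) := Real.sq_sqrt (by positivity)
  have hCσ : C * σ ^ 2 ≤ η / 4 := by
    have : C * σ ^ 2 ≤ C * s ^ 2 := by nlinarith
    rw [hs2] at this
    have hC' : C * (η / (4 * C)) = η / 4 := by field_simp
    linarith [this.trans_eq hC']
  have hbd := stmt16_bound Z xbar ν ε hZ hν hε hδ hδx σ hx
  have hCe : xbar ^ (ν + ε) * ν * (Z * δ) ^ (-(ν + 1)) * σ ^ 2 = C * σ ^ 2 := by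
    rw [hC_def]
  linarith [hbd.trans_eq' rfl]

/-- `sup_{x ∈ (0,x̄]} x^{ν+ε}·|(σ²+Zx)^{−ν} − (Zx)^{−ν}| → 0` as
`σ → 0⁺`; that is, `x^{ν+ε}(σ²+Zx)^{−ν}` converges to `x^{ν+ε}(Zx)^{−ν}` uniformly on
`(0, x̄]` as `σ → 0⁺`. -/
theorem stmt16 (Z xbar ν ε : ℝ) (hZ : 0 < Z) (hxbar : 0 < xbar)
    (hν : 0 < ν) (hε : 0 < ε) :
    Filter.Tendsto
      (fun σ : ℝ => ⨆ x ∈ Set.Ioc (0 : ℝ) xbar,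
        x ^ (ν + ε) * |(σ ^ 2 + Z * x) ^ (-ν) - (Z * x) ^ (-ν)|)
      (nhdsWithin 0 (Set.Ioi 0)) (nhds 0) ∧
    TendstoUniformlyOn
      (fun σ : ℝ => fun x : ℝ => x ^ (ν + ε) * (σ ^ 2 + Z * x) ^ (-ν))
      (fun x : ℝ => x ^ (ν + ε) * (Z * x) ^ (-ν))
      (nhdsWithin 0 (Set.Ioi 0)) (Set.Ioc 0 xbar) := by
  constructor
  · rw [Metric.tendsto_nhds]
    intro η hη
    filter_upwards [stmt16_eventually Z xbar ν ε hZ hxbar hν hε hη] with σ hσ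
    have hnonneg : 0 ≤ ⨆ x ∈ Set.Ioc (0 : ℝ) xbar,
        x ^ (ν + ε) * |(σ ^ 2 + Z * x) ^ (-ν) - (Z * x) ^ (-ν)| := by
      apply Real.iSup_nonneg
      intro x
      apply Real.iSup_nonneg
      intro hx
      have := Real.rpow_pos_of_pos hx.1 (ν + ε)
      positivity
    have hle : (⨆ x ∈ Set.Ioc (0 : ℝ) xbar,
        x ^ (ν + ε) * |(σ ^ 2 + Z * x) ^ (-ν) - (Z * x) ^ (-ν)|) ≤ η / 2 := by
      apply Real.iSup_le _ (by linarith)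
      intro x
      apply Real.iSup_le _ (by linarith)
      intro hx
      exact hσ x hx
    rw [Real.dist_eq, sub_zero, abs_of_nonneg hnonneg]
    linarith
  · rw [Metric.tendstoUniformlyOn_iff]
    intro η hη
    filter_upwards [stmt16_eventually Z xbar ν ε hZ hxbar hν hε hη] with σ hσ x hx
    have hxpow : 0 ≤ x ^ (ν + ε) := (Real.rpow_pos_of_pos hx.1 _).le
    rw [Real.dist_eq]
    have : x ^ (ν + ε) * (Z * x) ^ (-ν) - x ^ (ν + ε) * (σ ^ 2 + Z * x) ^ (-ν)
        = x ^ (ν + ε) * ((Z * x) ^ (-ν) - (σ ^ 2 + Z * x) ^ (-ν)) := by ring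
    rw [this, abs_mul, abs_of_nonneg hxpow, abs_sub_comm]
    have := hσ x hx
    linarith
end
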